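/- For every ξ ∈ (0, 1) there exists a constant C(ξ) such that if p ≥ C(log n / n)^{1/2}, then asymptotically almost surely the following holds in G(n,p) for every integer x with 1 ≤ x ≤ ξn/2: G(n,p) contains no set W of x vertices together with a set E of x pairwise vertex-disjoint edges, none of which has an endpoint in W, such that either (a) the endpoints of each edge in E have at least ξnp² common neighbours in W, or (b) each vertex in W is adjacent to both endpoints of at least ξnp² edges in E. -/

import Mathlib

open Finset

open scoped Classical

set_option maxHeartbeats 1600000
noncomputable section

namespace RandomTriangle

/-- Number of ordered adjacent pairs between `X` and `Y`. -/
def eBtw {V : Type*} (G : SimpleGraph V) (X Y : Finset V) : ℕ :=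
  ((X ×ˢ Y).filter fun a => G.Adj a.1 a.2).card

/-- Edge density between `X` and `Y`. -/
def dens {V : Type*} (G : SimpleGraph V) (X Y : Finset V) : ℝ :=
  (eBtw G X Y : ℝ) / ((X.card : ℝ) * (Y.card : ℝ))

/-- Number of neighbours of `v` in `X`. -/
def degIn {V : Type*} (G : SimpleGraph V) (v : V) (X : Finset V) : ℕ :=
  (X.filter fun w => G.Adj v w).card

/-- Neighbourhood of `v` inside `X`. -/
def nbhdIn {V : Type*} (G : SimpleGraph V) (v : V) (X : Finset V) : Finset V :=
  X.filter fun w => G.Adj v w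

/-- Number of common neighbours of `u` and `w` inside `X`. -/
def codegIn {V : Type*} (G : SimpleGraph V) (u w : V) (X : Finset V) : ℕ :=
  (X.filter fun x => G.Adj u x ∧ G.Adj w x).card

/-- `(ε, p)`-regular pair `(X, Y)`. -/
def RegularPair {V : Type*} (G : SimpleGraph V) (ε p : ℝ) (X Y : Finset V) : Prop :=
  ∀ X' ⊆ X, ∀ Y' ⊆ Y, ε * X.card ≤ (X'.card : ℝ) → ε * Y.card ≤ (Y'.card : ℝ) →
    |dens G X Y - dens G X' Y'| ≤ ε * p

/-- `(ε, p)`-regular triple. -/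
def RegularTriple {V : Type*} (G : SimpleGraph V) (ε p : ℝ) (V₁ V₂ V₃ : Finset V) : Prop :=
  RegularPair G ε p V₁ V₂ ∧ RegularPair G ε p V₁ V₃ ∧ RegularPair G ε p V₂ V₃

/-- `v ∈ V₁` is an `ε`-typical vertex of the triple `(V₁, V₂, V₃)`:
its neighbourhoods in `V₂`, `V₃` have the expected size `(1 ± ε)·d₁ᵢp|Vᵢ|`
(note `d₁ᵢ p = dens G V₁ Vᵢ`), and they contain large subsets forming an
`(ε, p)`-regular pair of density `(1 ± ε)·d₂₃p`. -/
def TypicalVertex {V : Type*} (G : SimpleGraph V) (ε p : ℝ) (V₁ V₂ V₃ : Finset V) (v : V) :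
    Prop :=
  ((1 - ε) * (dens G V₁ V₂ * V₂.card) ≤ ((nbhdIn G v V₂).card : ℝ) ∧
    ((nbhdIn G v V₂).card : ℝ) ≤ (1 + ε) * (dens G V₁ V₂ * V₂.card)) ∧
  ((1 - ε) * (dens G V₁ V₃ * V₃.card) ≤ ((nbhdIn G v V₃).card : ℝ) ∧
    ((nbhdIn G v V₃).card : ℝ) ≤ (1 + ε) * (dens G V₁ V₃ * V₃.card)) ∧
  ∃ N₂' ⊆ nbhdIn G v V₂, ∃ N₃' ⊆ nbhdIn G v V₃,
    (1 - ε) * ((nbhdIn G v V₂).card : ℝ) ≤ (N₂'.card : ℝ) ∧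
    (1 - ε) * ((nbhdIn G v V₃).card : ℝ) ≤ (N₃'.card : ℝ) ∧
    RegularPair G ε p N₂' N₃' ∧
    (1 - ε) * dens G V₂ V₃ ≤ dens G N₂' N₃' ∧
    dens G N₂' N₃' ≤ (1 + ε) * dens G V₂ V₃

/-- An `ε`-typical triple: `(ε,p)`-regular and in each part all but at most an
`ε`-fraction of the vertices are `ε`-typical. -/
def TypicalTriple {V : Type*} (G : SimpleGraph V) (ε p : ℝ) (V₁ V₂ V₃ : Finset V) : Prop :=
  RegularTriple G ε p V₁ V₂ V₃ ∧
  ((V₁.filter fun v => ¬ TypicalVertex G ε p V₁ V₂ V₃ v).card : ℝ) ≤ ε * V₁.card ∧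
  ((V₂.filter fun v => ¬ TypicalVertex G ε p V₂ V₁ V₃ v).card : ℝ) ≤ ε * V₂.card ∧
  ((V₃.filter fun v => ¬ TypicalVertex G ε p V₃ V₁ V₂ v).card : ℝ) ≤ ε * V₃.card

/-- A `(δ, ε, p)`-super-regular triple. -/
def SuperRegularTriple {V : Type*} (G : SimpleGraph V) (δ ε p : ℝ) (V₁ V₂ V₃ : Finset V) :
    Prop :=
  RegularTriple G ε p V₁ V₂ V₃ ∧
  δ * p ≤ dens G V₁ V₂ ∧ δ * p ≤ dens G V₁ V₃ ∧ δ * p ≤ dens G V₂ V₃ ∧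
  (∀ v ∈ V₁, TypicalVertex G ε p V₁ V₂ V₃ v) ∧
  (∀ v ∈ V₂, TypicalVertex G ε p V₂ V₁ V₃ v) ∧
  (∀ v ∈ V₃, TypicalVertex G ε p V₃ V₁ V₂ v)

/-- An edge `(u, w)` with `u ∈ V₂`, `w ∈ V₃` is `ε`-good (w.r.t. `V₁`) if its endpoints
have at least `(1 - ε)·d₁₂d₁₃p²|V₁|` common neighbours in `V₁`
(note `d₁₂d₁₃p² = dens G V₁ V₂ * dens G V₁ V₃`). -/
def GoodEdge {V : Type*} (G : SimpleGraph V) (ε : ℝ) (V₁ V₂ V₃ : Finset V) (u w : V) : Prop :=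
  (1 - ε) * (dens G V₁ V₂ * dens G V₁ V₃ * V₁.card) ≤ (codegIn G u w V₁ : ℝ)

/-- An `ε`-typical vertex `v ∈ V₁` is `ε`-good if the pair of its neighbourhoods in
`V₂`, `V₃` spans at most `ε·d₁₂d₁₃d₂₃p³|V₂||V₃|` edges that are not `ε`-good. -/
def GoodVertex {V : Type*} (G : SimpleGraph V) (ε p : ℝ) (V₁ V₂ V₃ : Finset V) (v : V) :
    Prop :=
  TypicalVertex G ε p V₁ V₂ V₃ v ∧
  ((((nbhdIn G v V₂) ×ˢ (nbhdIn G v V₃)).filter fun uw =>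
      G.Adj uw.1 uw.2 ∧ ¬ GoodEdge G ε V₁ V₂ V₃ uw.1 uw.2).card : ℝ) ≤
    ε * (dens G V₁ V₂ * dens G V₁ V₃ * dens G V₂ V₃ * V₂.card * V₃.card)

/-- A `(δ, ε, p)`-strong-super-regular triple. -/
def StrongSuperRegularTriple {V : Type*} (G : SimpleGraph V) (δ ε p : ℝ)
    (V₁ V₂ V₃ : Finset V) : Prop :=
  SuperRegularTriple G δ ε p V₁ V₂ V₃ ∧
  (∀ v ∈ V₁, GoodVertex G ε p V₁ V₂ V₃ v) ∧
  (∀ v ∈ V₂, GoodVertex G ε p V₂ V₁ V₃ v) ∧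
  (∀ v ∈ V₃, GoodVertex G ε p V₃ V₁ V₂ v)

/-- A triangle packing: a collection of pairwise vertex-disjoint triangles of `G`. -/
def IsTrianglePacking {V : Type*} [DecidableEq V] (G : SimpleGraph V)
    (T : Finset (Finset V)) : Prop :=
  (∀ t ∈ T, t.card = 3 ∧ ∀ x ∈ t, ∀ y ∈ t, x ≠ y → G.Adj x y) ∧
  (∀ s ∈ T, ∀ t ∈ T, s ≠ t → Disjoint s t)

def idx0 {k : ℕ} (t : Fin k) : Fin (3 * k) := ⟨3 * t.1, by have := t.2; omega⟩
def idx1 {k : ℕ} (t : Fin k) : Fin (3 * k) := ⟨3 * t.1 + 1, by have := t.2; omega⟩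
def idx2 {k : ℕ} (t : Fin k) : Fin (3 * k) := ⟨3 * t.1 + 2, by have := t.2; omega⟩

/-- The endpoints of every edge between `A` and `B` have at most `4|C|p²` common
neighbours in `C`. -/
def CodegBound {V : Type*} (G : SimpleGraph V) (p : ℝ) (A B C : Finset V) : Prop :=
  ∀ u ∈ A, ∀ w ∈ B, G.Adj u w → (codegIn G u w C : ℝ) ≤ 4 * C.card * p ^ 2

/-- The probability, in the Erdős–Rényi random graph `G(n, p)`, of the event `A`. -/
def gnpProb (n : ℕ) (p : ℝ) (A : Set (SimpleGraph (Fin n))) : ℝ :=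
  ∑ G ∈ Finset.univ.filter (fun G => G ∈ A),
    p ^ ((Finset.univ.filter fun e : Sym2 (Fin n) => e ∈ G.edgeSet).card) *
      (1 - p) ^ (n.choose 2 - (Finset.univ.filter fun e : Sym2 (Fin n) => e ∈ G.edgeSet).card)

/-- A sequence of graph properties holds asymptotically almost surely in `G(n, p n)`. -/
def AAS (p : ℕ → ℝ) (P : ∀ n : ℕ, SimpleGraph (Fin n) → Prop) : Prop :=
  Filter.Tendsto (fun n => gnpProb n (p n) {G | P n G}) Filter.atTop (nhds 1)

end RandomTriangle

open RandomTriangle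

namespace StmtAux

variable {n : ℕ}

def edges (n : ℕ) (G : SimpleGraph (Fin n)) : Finset (Sym2 (Fin n)) :=
  Finset.univ.filter fun e => e ∈ G.edgeSet

def DD (n : ℕ) : Finset (Sym2 (Fin n)) := Finset.univ.filter fun e => ¬ e.IsDiag

def wt (n : ℕ) (p : ℝ) (G : SimpleGraph (Fin n)) : ℝ :=
  p ^ (edges n G).card * (1 - p) ^ (n.choose 2 - (edges n G).card)

lemma mem_edges {G : SimpleGraph (Fin n)} {e : Sym2 (Fin n)} :
    e ∈ edges n G ↔ e ∈ G.edgeSet := by simp [edges]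

lemma card_DD : (DD n).card = n.choose 2 := by
  have h : DD n = (⊤ : SimpleGraph (Fin n)).edgeFinset := by
    ext e
    simp [DD, SimpleGraph.mem_edgeFinset, SimpleGraph.edgeSet_top]
  rw [h, SimpleGraph.card_edgeFinset_top_eq_card_choose_two, Fintype.card_fin]

lemma edges_subset_DD (G : SimpleGraph (Fin n)) : edges n G ⊆ DD n := by
  intro e he
  rw [mem_edges] at he
  simp only [DD, mem_filter, mem_univ, true_and]
  exact G.not_isDiag_of_mem_edgeSet he

lemma edges_fromEdgeSet (S : Finset (Sym2 (Fin n))) (hS : S ⊆ DD n) :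
    edges n (SimpleGraph.fromEdgeSet ↑S) = S := by
  ext e
  rw [mem_edges]
  rw [SimpleGraph.edgeSet_fromEdgeSet]
  simp only [Set.mem_diff, Finset.mem_coe, Set.mem_setOf_eq]
  constructor
  · rintro ⟨h, -⟩; exact h
  · intro h
    refine ⟨h, ?_⟩
    have := hS h
    simpa [DD] using this

lemma fromEdgeSet_edges (G : SimpleGraph (Fin n)) :
    SimpleGraph.fromEdgeSet ↑(edges n G) = G := by
  have h : (↑(edges n G) : Set (Sym2 (Fin n))) = G.edgeSet := by
    ext e; simp [edges]
  rw [h, SimpleGraph.fromEdgeSet_edgeSet]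

lemma sum_graphs (f : Finset (Sym2 (Fin n)) → ℝ) :
    ∑ G : SimpleGraph (Fin n), f (edges n G) = ∑ S ∈ (DD n).powerset, f S := by
  refine Finset.sum_nbij' (fun G => edges n G) (fun S => SimpleGraph.fromEdgeSet ↑S)
    (fun G _ => Finset.mem_powerset.2 (edges_subset_DD G)) (fun S _ => Finset.mem_univ _)
    (fun G _ => fromEdgeSet_edges G)
    (fun S hS => edges_fromEdgeSet S (Finset.mem_powerset.1 hS))
    (fun G _ => rfl)

lemma sum_pow_powerset {ι : Type*} [DecidableEq ι] (a b : ℝ) (U : Finset ι) :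
    ∑ S ∈ U.powerset, a ^ S.card * b ^ (U.card - S.card) = (a + b) ^ U.card := by
  rw [← Finset.prod_const, Finset.prod_add]
  refine Finset.sum_congr rfl fun S hS => ?_
  rw [Finset.mem_powerset] at hS
  rw [Finset.prod_const, Finset.prod_const, Finset.card_sdiff_of_subset hS]

lemma sum_wt_subset (p : ℝ) (F : Finset (Sym2 (Fin n))) (hF : F ⊆ DD n) :
    ∑ G : SimpleGraph (Fin n), (if F ⊆ edges n G then wt n p G else 0) = p ^ F.card := by
  have h1 : ∑ G : SimpleGraph (Fin n), (if F ⊆ edges n G then wt n p G else 0)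
      = ∑ S ∈ (DD n).powerset,
          (if F ⊆ S then p ^ S.card * (1 - p) ^ (n.choose 2 - S.card) else 0) :=
    sum_graphs (fun S => if F ⊆ S then p ^ S.card * (1 - p) ^ (n.choose 2 - S.card) else 0)
  rw [h1, Finset.sum_ite, Finset.sum_const_zero, add_zero]
  have h2 : ∑ S ∈ (DD n).powerset.filter (fun S => F ⊆ S),
        p ^ S.card * (1 - p) ^ (n.choose 2 - S.card)
      = ∑ S' ∈ ((DD n) \ F).powerset,
        p ^ (F ∪ S').card * (1 - p) ^ (n.choose 2 - (F ∪ S').card) := by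
    refine Finset.sum_nbij' (fun S => S \ F) (fun S' => F ∪ S') ?_ ?_ ?_ ?_ ?_
    · intro S hS
      simp only [Finset.mem_filter, Finset.mem_powerset] at hS
      rw [Finset.mem_powerset]
      exact Finset.sdiff_subset_sdiff hS.1 Finset.Subset.rfl
    · intro S' hS'
      rw [Finset.mem_powerset] at hS'
      simp only [Finset.mem_filter, Finset.mem_powerset]
      exact ⟨Finset.union_subset hF (hS'.trans Finset.sdiff_subset), Finset.subset_union_left⟩
    · intro S hS
      simp only [Finset.mem_filter] at hS
      exact Finset.union_sdiff_of_subset hS.2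
    · intro S' hS'
      rw [Finset.mem_powerset] at hS'
      exact Finset.union_sdiff_cancel_left
        (Finset.disjoint_right.2 fun a ha => (Finset.mem_sdiff.1 (hS' ha)).2)
    · intro S hS
      simp only [Finset.mem_filter] at hS
      rw [Finset.union_sdiff_of_subset hS.2]
  rw [h2]
  have h3 : ∀ S' ∈ ((DD n) \ F).powerset,
      p ^ (F ∪ S').card * (1 - p) ^ (n.choose 2 - (F ∪ S').card)
        = p ^ F.card * (p ^ S'.card * (1 - p) ^ (((DD n) \ F).card - S'.card)) := by
    intro S' hS'
    rw [Finset.mem_powerset] at hS'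
    have hdisj : Disjoint F S' :=
      Finset.disjoint_right.2 fun a ha => (Finset.mem_sdiff.1 (hS' ha)).2
    have hcu : (F ∪ S').card = F.card + S'.card := Finset.card_union_of_disjoint hdisj
    have hcd : ((DD n) \ F).card = n.choose 2 - F.card := by
      rw [Finset.card_sdiff_of_subset hF, card_DD]
    rw [hcu, pow_add, hcd, Nat.sub_sub, mul_assoc]
  rw [Finset.sum_congr rfl h3, ← Finset.mul_sum, sum_pow_powerset]
  norm_num

lemma sum_wt (p : ℝ) : ∑ G : SimpleGraph (Fin n), wt n p G = 1 := by
  have := sum_wt_subset (n := n) p ∅ (Finset.empty_subset _)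
  simpa using this


lemma gnpProb_eq (p : ℝ) (A : Set (SimpleGraph (Fin n))) :
    gnpProb n p A = ∑ G : SimpleGraph (Fin n), if G ∈ A then wt n p G else 0 := by
  rw [gnpProb, Finset.sum_filter]
  rfl

lemma wt_nonneg {p : ℝ} (hp0 : 0 ≤ p) (hp1 : p ≤ 1) (G : SimpleGraph (Fin n)) :
    0 ≤ wt n p G :=
  mul_nonneg (pow_nonneg hp0 _) (pow_nonneg (by linarith) _)

lemma gnpProb_compl (p : ℝ) (A : Set (SimpleGraph (Fin n))) :
    gnpProb n p A + gnpProb n p {G | G ∉ A} = 1 := by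
  rw [gnpProb_eq, gnpProb_eq]
  rw [← Finset.sum_add_distrib]
  rw [← sum_wt (n := n) p]
  refine Finset.sum_congr rfl fun G _ => ?_
  by_cases hG : G ∈ A
  · rw [if_pos hG, if_neg (by simpa using hG), add_zero]
  · rw [if_neg hG, if_pos (by simpa using hG), zero_add]

lemma gnpProb_of_forall (p : ℝ) (A : Set (SimpleGraph (Fin n))) (h : ∀ G, G ∈ A) :
    gnpProb n p A = 1 := by
  rw [gnpProb_eq]
  rw [← sum_wt (n := n) p]
  exact Finset.sum_congr rfl fun G _ => if_pos (h G)

lemma gnpProb_nonneg {p : ℝ} (hp0 : 0 ≤ p) (hp1 : p ≤ 1) (A : Set (SimpleGraph (Fin n))) :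
    0 ≤ gnpProb n p A := by
  rw [gnpProb_eq]
  refine Finset.sum_nonneg fun G _ => ?_
  split
  · exact wt_nonneg hp0 hp1 G
  · exact le_refl 0


lemma gnpProb_union_bound {ι : Type*} {p : ℝ} (hp0 : 0 ≤ p) (hp1 : p ≤ 1)
    (A : Set (SimpleGraph (Fin n))) (I : Finset ι) (B : ι → Set (SimpleGraph (Fin n)))
    (hcov : ∀ G, G ∈ A → ∃ i ∈ I, G ∈ B i) :
    gnpProb n p A ≤ ∑ i ∈ I, gnpProb n p (B i) := by
  rw [gnpProb_eq]
  have step : ∀ G : SimpleGraph (Fin n),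
      (if G ∈ A then wt n p G else 0) ≤ ∑ i ∈ I, (if G ∈ B i then wt n p G else 0) := by
    intro G
    by_cases hG : G ∈ A
    · rw [if_pos hG]
      obtain ⟨i, hi, hGB⟩ := hcov G hG
      have h1 : wt n p G = (if G ∈ B i then wt n p G else 0) := (if_pos hGB).symm
      refine h1.le.trans ?_
      exact Finset.single_le_sum (f := fun i => if G ∈ B i then wt n p G else 0)
        (fun j _ => by
          split <;> [exact wt_nonneg hp0 hp1 G; exact le_refl 0]) hi
    · rw [if_neg hG]
      exact Finset.sum_nonneg fun j _ => by
        split <;> [exact wt_nonneg hp0 hp1 G; exact le_refl 0]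
  calc ∑ G : SimpleGraph (Fin n), (if G ∈ A then wt n p G else 0)
      ≤ ∑ G : SimpleGraph (Fin n), ∑ i ∈ I, (if G ∈ B i then wt n p G else 0) :=
        Finset.sum_le_sum fun G _ => step G
    _ = ∑ i ∈ I, ∑ G : SimpleGraph (Fin n), (if G ∈ B i then wt n p G else 0) :=
        Finset.sum_comm
    _ = ∑ i ∈ I, gnpProb n p (B i) := by
        exact Finset.sum_congr rfl fun i _ => (gnpProb_eq p (B i)).symm

/-- The bad event for a fixed pair `(W, E)` and threshold `c`. -/
def bad (n : ℕ) (c : ℝ) (W : Finset (Fin n)) (E : Finset (Fin n × Fin n)) :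
    Set (SimpleGraph (Fin n)) :=
  {G | (∀ e ∈ E, G.Adj e.1 e.2) ∧
    ((∀ e ∈ E, c ≤ (codegIn G e.1 e.2 W : ℝ)) ∨
     (∀ w ∈ W, c ≤ ((E.filter fun e => G.Adj w e.1 ∧ G.Adj w e.2).card : ℝ)))}

/-- The edge set associated to a configuration. -/
def FT (E : Finset (Fin n × Fin n)) (T : Finset (Fin n × (Fin n × Fin n))) :
    Finset (Sym2 (Fin n)) :=
  (E.image fun e => s(e.1, e.2)) ∪ (T.image fun q => s(q.1, q.2.1)) ∪
    (T.image fun q => s(q.1, q.2.2))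

lemma card_FT (W : Finset (Fin n)) (E : Finset (Fin n × Fin n))
    (h1 : ∀ e ∈ E, e.1 ≠ e.2 ∧ e.1 ∉ W ∧ e.2 ∉ W)
    (h2 : ∀ e ∈ E, ∀ f ∈ E, e ≠ f → e.1 ≠ f.1 ∧ e.1 ≠ f.2 ∧ e.2 ≠ f.1 ∧ e.2 ≠ f.2)
    (T : Finset (Fin n × (Fin n × Fin n))) (hT : T ⊆ W ×ˢ E) :
    (FT E T).card = E.card + 2 * T.card := by
  have hmem : ∀ q ∈ T, q.1 ∈ W ∧ q.2 ∈ E := fun q hq => Finset.mem_product.1 (hT hq)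
  have hinjA : Set.InjOn (fun e : Fin n × Fin n => s(e.1, e.2)) E := by
    intro e he f hf hef
    simp only [Sym2.eq_iff] at hef
    by_contra hne
    obtain ⟨a, b, c, d⟩ := h2 e he f hf hne
    rcases hef with ⟨h, h'⟩ | ⟨h, h'⟩
    · exact a h
    · exact b h
  have hinjB1 : Set.InjOn (fun q : Fin n × (Fin n × Fin n) => s(q.1, q.2.1)) T := by
    intro q hq r hr hqr
    simp only [Sym2.eq_iff] at hqr
    obtain ⟨hqW, hqE⟩ := hmem q hq
    obtain ⟨hrW, hrE⟩ := hmem r hr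
    rcases hqr with ⟨h, h'⟩ | ⟨h, h'⟩
    · have h22 : q.2 = r.2 := by
        by_contra hne
        exact (h2 q.2 hqE r.2 hrE hne).1 h'
      exact Prod.ext h h22
    · exact absurd (h ▸ hqW) (h1 r.2 hrE).2.1
  have hinjB2 : Set.InjOn (fun q : Fin n × (Fin n × Fin n) => s(q.1, q.2.2)) T := by
    intro q hq r hr hqr
    simp only [Sym2.eq_iff] at hqr
    obtain ⟨hqW, hqE⟩ := hmem q hq
    obtain ⟨hrW, hrE⟩ := hmem r hr
    rcases hqr with ⟨h, h'⟩ | ⟨h, h'⟩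
    · have h22 : q.2 = r.2 := by
        by_contra hne
        exact (h2 q.2 hqE r.2 hrE hne).2.2.2 h'
      exact Prod.ext h h22
    · exact absurd (h ▸ hqW) (h1 r.2 hrE).2.2
  have hdAB1 : Disjoint (E.image fun e => s(e.1, e.2)) (T.image fun q => s(q.1, q.2.1)) := by
    rw [Finset.disjoint_left]
    rintro x hx hx'
    obtain ⟨e, he, rfl⟩ := Finset.mem_image.1 hx
    obtain ⟨q, hq, hee⟩ := Finset.mem_image.1 hx'
    obtain ⟨hqW, hqE⟩ := hmem q hq
    rw [Sym2.eq_iff] at hee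
    rcases hee with ⟨h, h'⟩ | ⟨h, h'⟩
    · exact (h1 e he).2.1 (h ▸ hqW)
    · exact (h1 e he).2.2 (h ▸ hqW)
  have hdAB2 : Disjoint (E.image fun e => s(e.1, e.2)) (T.image fun q => s(q.1, q.2.2)) := by
    rw [Finset.disjoint_left]
    rintro x hx hx'
    obtain ⟨e, he, rfl⟩ := Finset.mem_image.1 hx
    obtain ⟨q, hq, hee⟩ := Finset.mem_image.1 hx'
    obtain ⟨hqW, hqE⟩ := hmem q hq
    rw [Sym2.eq_iff] at hee
    rcases hee with ⟨h, h'⟩ | ⟨h, h'⟩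
    · exact (h1 e he).2.1 (h ▸ hqW)
    · exact (h1 e he).2.2 (h ▸ hqW)
  have hdB1B2 : Disjoint (T.image fun q => s(q.1, q.2.1)) (T.image fun q => s(q.1, q.2.2)) := by
    rw [Finset.disjoint_left]
    rintro x hx hx'
    obtain ⟨q, hq, rfl⟩ := Finset.mem_image.1 hx
    obtain ⟨r, hr, hee⟩ := Finset.mem_image.1 hx'
    obtain ⟨hqW, hqE⟩ := hmem q hq
    obtain ⟨hrW, hrE⟩ := hmem r hr
    rw [Sym2.eq_iff] at hee
    rcases hee with ⟨h, h'⟩ | ⟨h, h'⟩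
    · have h22 : q.2 = r.2 := by
        by_contra hne
        exact (h2 q.2 hqE r.2 hrE hne).2.1 h'.symm
      have h23 : q.2.2 = r.2.2 := by rw [h22]
      exact (h1 q.2 hqE).1 (h'.symm.trans h23.symm)
    · exact (h1 r.2 hrE).2.2 (h'.symm ▸ hqW)
  have hd2 : Disjoint ((E.image fun e => s(e.1, e.2)) ∪ T.image fun q => s(q.1, q.2.1))
      (T.image fun q => s(q.1, q.2.2)) :=
    Finset.disjoint_union_left.2 ⟨hdAB2, hdB1B2⟩
  rw [FT, Finset.card_union_of_disjoint hd2, Finset.card_union_of_disjoint hdAB1,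
    Finset.card_image_of_injOn hinjA, Finset.card_image_of_injOn hinjB1,
    Finset.card_image_of_injOn hinjB2]
  omega

lemma FT_subset_DD (W : Finset (Fin n)) (E : Finset (Fin n × Fin n))
    (h1 : ∀ e ∈ E, e.1 ≠ e.2 ∧ e.1 ∉ W ∧ e.2 ∉ W)
    (T : Finset (Fin n × (Fin n × Fin n))) (hT : T ⊆ W ×ˢ E) :
    FT E T ⊆ DD n := by
  have hmem : ∀ q ∈ T, q.1 ∈ W ∧ q.2 ∈ E := fun q hq => Finset.mem_product.1 (hT hq)
  intro x hx
  simp only [FT, Finset.mem_union, Finset.mem_image] at hx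
  simp only [DD, Finset.mem_filter, Finset.mem_univ, true_and]
  rcases hx with (⟨e, he, rfl⟩ | ⟨q, hq, rfl⟩) | ⟨q, hq, rfl⟩
  · rw [Sym2.mk_isDiag_iff]
    exact (h1 e he).1
  · rw [Sym2.mk_isDiag_iff]
    intro h
    exact (h1 q.2 (hmem q hq).2).2.1 (h ▸ (hmem q hq).1)
  · rw [Sym2.mk_isDiag_iff]
    intro h
    exact (h1 q.2 (hmem q hq).2).2.2 (h ▸ (hmem q hq).1)

lemma FT_subset_edges {G : SimpleGraph (Fin n)} {E : Finset (Fin n × Fin n)}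
    {T : Finset (Fin n × (Fin n × Fin n))} :
    FT E T ⊆ edges n G ↔
      (∀ e ∈ E, G.Adj e.1 e.2) ∧ (∀ q ∈ T, G.Adj q.1 q.2.1 ∧ G.Adj q.1 q.2.2) := by
  simp only [FT, Finset.union_subset_iff, Finset.image_subset_iff, mem_edges,
    SimpleGraph.mem_edgeSet]
  constructor
  · rintro ⟨⟨hA, hB1⟩, hB2⟩
    exact ⟨hA, fun q hq => ⟨hB1 q hq, hB2 q hq⟩⟩
  · rintro ⟨hA, hB⟩
    exact ⟨⟨hA, fun q hq => (hB q hq).1⟩, fun q hq => (hB q hq).2⟩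

lemma Tbig_card_a {G : SimpleGraph (Fin n)} (W : Finset (Fin n)) (E : Finset (Fin n × Fin n)) :
    ((W ×ˢ E).filter fun q => G.Adj q.1 q.2.1 ∧ G.Adj q.1 q.2.2).card
      = ∑ e ∈ E, codegIn G e.1 e.2 W := by
  rw [Finset.card_eq_sum_card_fiberwise
    (f := fun q : Fin n × (Fin n × Fin n) => q.2) (t := E)
    (fun q hq => (Finset.mem_product.1 (Finset.mem_filter.1 hq).1).2)]
  refine Finset.sum_congr rfl fun e he => ?_
  rw [codegIn]
  refine Finset.card_bij (fun q _ => q.1) ?_ ?_ ?_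
  · intro q hq
    simp only [Finset.mem_filter] at hq ⊢
    obtain ⟨⟨hq1, hq2⟩, hq3⟩ := hq
    obtain ⟨hqW, -⟩ := Finset.mem_product.1 hq1
    refine ⟨hqW, ?_, ?_⟩
    · rw [hq3] at hq2
      exact hq2.1.symm
    · rw [hq3] at hq2
      exact hq2.2.symm
  · intro q hq r hr hqr
    simp only [Finset.mem_filter] at hq hr
    exact Prod.ext hqr (hq.2.trans hr.2.symm)
  · intro w hw
    simp only [Finset.mem_filter] at hw
    refine ⟨(w, e), ?_, rfl⟩
    simp only [Finset.mem_filter, Finset.mem_product]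
    exact ⟨⟨⟨hw.1, he⟩, hw.2.1.symm, hw.2.2.symm⟩, trivial⟩

lemma Tbig_card_b {G : SimpleGraph (Fin n)} (W : Finset (Fin n)) (E : Finset (Fin n × Fin n)) :
    ((W ×ˢ E).filter fun q => G.Adj q.1 q.2.1 ∧ G.Adj q.1 q.2.2).card
      = ∑ w ∈ W, (E.filter fun e => G.Adj w e.1 ∧ G.Adj w e.2).card := by
  rw [Finset.card_eq_sum_card_fiberwise
    (f := fun q : Fin n × (Fin n × Fin n) => q.1) (t := W)
    (fun q hq => (Finset.mem_product.1 (Finset.mem_filter.1 hq).1).1)]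
  refine Finset.sum_congr rfl fun w hw => ?_
  refine Finset.card_bij (fun q _ => q.2) ?_ ?_ ?_
  · intro q hq
    simp only [Finset.mem_filter] at hq ⊢
    obtain ⟨⟨hq1, hq2⟩, hq3⟩ := hq
    obtain ⟨-, hqE⟩ := Finset.mem_product.1 hq1
    rw [hq3] at hq2
    exact ⟨hqE, hq2⟩
  · intro q hq r hr hqr
    simp only [Finset.mem_filter] at hq hr
    exact Prod.ext (hq.2.trans hr.2.symm) hqr
  · intro e he
    simp only [Finset.mem_filter] at he
    refine ⟨(w, e), ?_, rfl⟩
    simp only [Finset.mem_filter, Finset.mem_product]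
    exact ⟨⟨⟨hw, he.1⟩, he.2⟩, trivial⟩

lemma Tbig_card_ge {G : SimpleGraph (Fin n)} {c : ℝ} {W : Finset (Fin n)}
    {E : Finset (Fin n × Fin n)} (hcard : E.card = W.card) (hG : G ∈ bad n c W E) :
    (W.card : ℝ) * c ≤
      (((W ×ˢ E).filter fun q => G.Adj q.1 q.2.1 ∧ G.Adj q.1 q.2.2).card : ℝ) := by
  rcases hG.2 with hca | hcb
  · rw [Tbig_card_a W E]
    push_cast
    calc (W.card : ℝ) * c = ∑ _e ∈ E, c := by
          rw [Finset.sum_const, nsmul_eq_mul, hcard]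
      _ ≤ ∑ e ∈ E, (codegIn G e.1 e.2 W : ℝ) := Finset.sum_le_sum fun e he => hca e he
  · rw [Tbig_card_b W E]
    push_cast
    calc (W.card : ℝ) * c = ∑ _w ∈ W, c := by
          rw [Finset.sum_const, nsmul_eq_mul]
      _ ≤ ∑ w ∈ W, ((E.filter fun e => G.Adj w e.1 ∧ G.Adj w e.2).card : ℝ) :=
          Finset.sum_le_sum fun w hw => hcb w hw

lemma config_bound {p c : ℝ} (hp0 : 0 ≤ p) (hp1 : p ≤ 1)
    (W : Finset (Fin n)) (E : Finset (Fin n × Fin n))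
    (h1 : ∀ e ∈ E, e.1 ≠ e.2 ∧ e.1 ∉ W ∧ e.2 ∉ W)
    (h2 : ∀ e ∈ E, ∀ f ∈ E, e ≠ f → e.1 ≠ f.1 ∧ e.1 ≠ f.2 ∧ e.2 ≠ f.1 ∧ e.2 ≠ f.2)
    (hcard : E.card = W.card) :
    gnpProb n p (bad n c W E) ≤
      (2 : ℝ) ^ (-((W.card : ℝ) * c)) * (p ^ W.card * (1 + p ^ 2) ^ (W.card ^ 2)) := by
  rw [gnpProb_eq]
  set s : ℝ := (W.card : ℝ) * c with hs
  have h2s : (0 : ℝ) < (2 : ℝ) ^ s := Real.rpow_pos_of_pos two_pos s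
  have hite : ∀ (P : Prop) (inst : Decidable P) (G : SimpleGraph (Fin n)),
      (0:ℝ) ≤ @ite ℝ P inst (wt n p G) 0 := by
    intro P inst G
    split
    · exact wt_nonneg hp0 hp1 G
    · exact le_refl 0
  have key : ∀ G : SimpleGraph (Fin n), (if G ∈ bad n c W E then wt n p G else 0) ≤
      (2 : ℝ) ^ (-s) *
        ∑ T ∈ (W ×ˢ E).powerset, (if FT E T ⊆ edges n G then wt n p G else 0) := by
    intro G
    by_cases hG : G ∈ bad n c W E
    · rw [if_pos hG]
      set Tbig := (W ×ˢ E).filter fun q => G.Adj q.1 q.2.1 ∧ G.Adj q.1 q.2.2 with hTb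
      have hsum : (2 : ℝ) ^ s * wt n p G ≤
          ∑ T ∈ (W ×ˢ E).powerset, (if FT E T ⊆ edges n G then wt n p G else 0) := by
        have hsub : Tbig.powerset ⊆ (W ×ˢ E).powerset :=
          Finset.powerset_mono.2 (Finset.filter_subset _ _)
        calc (2 : ℝ) ^ s * wt n p G ≤ (2 : ℝ) ^ ((Tbig.card : ℝ)) * wt n p G := by
              exact mul_le_mul_of_nonneg_right
                (Real.rpow_le_rpow_of_exponent_le one_le_two (Tbig_card_ge hcard hG))
                (wt_nonneg hp0 hp1 G)
          _ = ∑ _T ∈ Tbig.powerset, wt n p G := by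
              rw [Finset.sum_const, Finset.card_powerset, nsmul_eq_mul, Real.rpow_natCast]
              push_cast
              ring
          _ = ∑ T ∈ Tbig.powerset, (if FT E T ⊆ edges n G then wt n p G else 0) := by
              refine Finset.sum_congr rfl fun T hT => ?_
              rw [if_pos]
              rw [FT_subset_edges]
              refine ⟨hG.1, fun q hq => ?_⟩
              exact (Finset.mem_filter.1 (Finset.mem_powerset.1 hT hq)).2
          _ ≤ ∑ T ∈ (W ×ˢ E).powerset, (if FT E T ⊆ edges n G then wt n p G else 0) :=
              Finset.sum_le_sum_of_subset_of_nonneg hsub (fun T _ _ => hite _ _ G)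
      calc wt n p G = (2 : ℝ) ^ (-s) * ((2 : ℝ) ^ s * wt n p G) := by
            rw [Real.rpow_neg (by norm_num : (0:ℝ) ≤ 2)]
            field_simp
        _ ≤ (2 : ℝ) ^ (-s) * ∑ T ∈ (W ×ˢ E).powerset,
              (if FT E T ⊆ edges n G then wt n p G else 0) :=
            mul_le_mul_of_nonneg_left hsum (Real.rpow_nonneg (by norm_num) _)
    · rw [if_neg hG]
      exact mul_nonneg (Real.rpow_nonneg (by norm_num) _)
        (Finset.sum_nonneg fun T _ => hite _ _ G)
  calc ∑ G : SimpleGraph (Fin n), (if G ∈ bad n c W E then wt n p G else 0)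
      ≤ ∑ G : SimpleGraph (Fin n), (2 : ℝ) ^ (-s) *
          ∑ T ∈ (W ×ˢ E).powerset, (if FT E T ⊆ edges n G then wt n p G else 0) :=
        Finset.sum_le_sum fun G _ => key G
    _ = (2 : ℝ) ^ (-s) * ∑ T ∈ (W ×ˢ E).powerset,
          ∑ G : SimpleGraph (Fin n), (if FT E T ⊆ edges n G then wt n p G else 0) := by
        rw [← Finset.mul_sum]
        congr 1
        exact Finset.sum_comm
    _ = (2 : ℝ) ^ (-s) * ∑ T ∈ (W ×ˢ E).powerset, p ^ (E.card + 2 * T.card) := by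
        congr 1
        refine Finset.sum_congr rfl fun T hT => ?_
        rw [sum_wt_subset p (FT E T) (FT_subset_DD W E h1 T (Finset.mem_powerset.1 hT)),
          card_FT W E h1 h2 T (Finset.mem_powerset.1 hT)]
    _ = (2 : ℝ) ^ (-s) * (p ^ W.card * (1 + p ^ 2) ^ (W.card ^ 2)) := by
        congr 1
        have : ∀ T ∈ (W ×ˢ E).powerset,
            p ^ (E.card + 2 * T.card)
              = p ^ E.card * ((p ^ 2) ^ T.card * (1:ℝ) ^ ((W ×ˢ E).card - T.card)) := by
          intro T hT
          rw [pow_add, pow_mul, one_pow, mul_one]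
        rw [Finset.sum_congr rfl this, ← Finset.mul_sum, sum_pow_powerset,
          Finset.card_product, hcard, sq]
        ring

lemma config_num {ξ : ℝ} {n x : ℕ} {p : ℝ} (hn : 1 ≤ n)
    (hx : (x : ℝ) ≤ ξ * n / 2) (hp0 : 0 ≤ p) (hp1 : p ≤ 1)
    (hplb : (30 : ℝ) * Real.log n ≤ ξ * n * p ^ 2) :
    (2 : ℝ) ^ (-((x : ℝ) * (ξ * n * p ^ 2))) * (p ^ x * (1 + p ^ 2) ^ (x ^ 2))
      ≤ ((n : ℝ) ^ (5 * x))⁻¹ := by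
  have hnR : (1:ℝ) ≤ (n:ℝ) := by exact_mod_cast hn
  have hnpos : (0:ℝ) < n := by linarith
  have hlogn : 0 ≤ Real.log n := Real.log_nonneg hnR
  have hxnn : (0:ℝ) ≤ x := Nat.cast_nonneg x
  set s : ℝ := (x : ℝ) * (ξ * n * p ^ 2) with hs
  have hs30 : 30 * ((x:ℝ) * Real.log n) ≤ s := by
    rw [hs]
    calc 30 * ((x:ℝ) * Real.log n) = (x:ℝ) * (30 * Real.log n) := by ring
      _ ≤ (x:ℝ) * (ξ * n * p ^ 2) := mul_le_mul_of_nonneg_left hplb hxnn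
  have hd : (x:ℝ)^2 * p^2 ≤ s / 2 := by
    have h := mul_le_mul_of_nonneg_right hx (mul_nonneg hxnn (sq_nonneg p))
    nlinarith [h]
  have hA : p ^ x ≤ 1 := pow_le_one₀ hp0 hp1
  have hB : (1 + p ^ 2) ^ (x ^ 2) ≤ Real.exp (s / 2) := by
    have h1 : (1 + p ^ 2) ≤ Real.exp (p ^ 2) := by
      have := Real.add_one_le_exp (p ^ 2); linarith
    calc (1 + p ^ 2) ^ (x ^ 2) ≤ (Real.exp (p ^ 2)) ^ (x ^ 2) :=
          pow_le_pow_left₀ (by positivity) h1 _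
      _ = Real.exp (((x ^ 2 : ℕ) : ℝ) * p ^ 2) := (Real.exp_nat_mul _ _).symm
      _ ≤ Real.exp (s / 2) := by
          apply Real.exp_le_exp.2
          push_cast
          exact hd
  have hC : (2 : ℝ) ^ (-s) = Real.exp (Real.log 2 * (-s)) :=
    Real.rpow_def_of_pos two_pos (-s)
  have hE : Real.log 2 * (-s) + s / 2 ≤ -(((5 * x : ℕ)) : ℝ) * Real.log n := by
    have hlog2 : (0.6931471803 : ℝ) < Real.log 2 := Real.log_two_gt_d9
    have key1 : (Real.log 2 - 1/2) * (30 * ((x:ℝ) * Real.log n)) ≤ (Real.log 2 - 1/2) * s :=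
      mul_le_mul_of_nonneg_left hs30 (by linarith)
    have key2 : (0:ℝ) ≤ (30 * Real.log 2 - 20) * ((x:ℝ) * Real.log n) :=
      mul_nonneg (by linarith) (mul_nonneg hxnn hlogn)
    push_cast
    nlinarith [key1, key2]
  have hprod : p ^ x * (1 + p ^ 2) ^ (x ^ 2) ≤ Real.exp (s / 2) := by
    calc p ^ x * (1 + p ^ 2) ^ (x ^ 2) ≤ 1 * Real.exp (s / 2) :=
        mul_le_mul hA hB (by positivity) (by norm_num)
      _ = Real.exp (s / 2) := one_mul _
  calc (2:ℝ)^(-s) * (p ^ x * (1 + p^2)^(x^2))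
      ≤ (2:ℝ)^(-s) * Real.exp (s/2) :=
        mul_le_mul_of_nonneg_left hprod (Real.rpow_nonneg (by norm_num) _)
    _ = Real.exp (Real.log 2 * (-s) + s / 2) := by rw [hC, Real.exp_add]
    _ ≤ Real.exp (-(((5*x : ℕ)):ℝ) * Real.log n) := Real.exp_le_exp.2 hE
    _ = ((n:ℝ) ^ (5*x))⁻¹ := by
        rw [neg_mul, Real.exp_neg, Real.exp_nat_mul, Real.exp_log hnpos]

def prop (ξ : ℝ) (n : ℕ) (p : ℝ) (G : SimpleGraph (Fin n)) : Prop :=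
  ∀ x : ℕ, 1 ≤ x → (x : ℝ) ≤ ξ * n / 2 →
    ¬ ∃ (W : Finset (Fin n)) (E : Finset (Fin n × Fin n)),
      W.card = x ∧ E.card = x ∧
      (∀ e ∈ E, G.Adj e.1 e.2 ∧ e.1 ∉ W ∧ e.2 ∉ W) ∧
      (∀ e ∈ E, ∀ f ∈ E, e ≠ f →
        e.1 ≠ f.1 ∧ e.1 ≠ f.2 ∧ e.2 ≠ f.1 ∧ e.2 ≠ f.2) ∧
      ((∀ e ∈ E, ξ * n * p ^ 2 ≤ (codegIn G e.1 e.2 W : ℝ)) ∨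
       (∀ w ∈ W, ξ * n * p ^ 2 ≤
          ((E.filter fun e => G.Adj w e.1 ∧ G.Adj w e.2).card : ℝ)))

lemma prop_of_large_p {ξ : ℝ} {n : ℕ} {p : ℝ} (hp : 1/2 < p^2)
    (G : SimpleGraph (Fin n)) : prop ξ n p G := by
  intro x hx1 hx2 hW
  obtain ⟨W, E, hWc, hEc, hadj, hdisj, hcase⟩ := hW
  have hx1R : (1:ℝ) ≤ (x:ℝ) := by exact_mod_cast hx1
  have hnpos : (0:ℝ) < ξ * n := by linarith
  have hlt : ξ * n / 2 < ξ * n * p^2 := by nlinarith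
  rcases hcase with hca | hcb
  · have hE : E.Nonempty := Finset.card_pos.1 (by rw [hEc]; exact hx1)
    obtain ⟨e, he⟩ := hE
    have hub := hca e he
    have hlb : (codegIn G e.1 e.2 W : ℝ) ≤ x := by
      rw [codegIn]
      rw [← hWc]
      exact_mod_cast Finset.card_filter_le _ _
    linarith
  · have hW' : W.Nonempty := Finset.card_pos.1 (by rw [hWc]; exact hx1)
    obtain ⟨w, hw⟩ := hW'
    have hub := hcb w hw
    have hlb : ((E.filter fun e => G.Adj w e.1 ∧ G.Adj w e.2).card : ℝ) ≤ x := by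
      rw [← hEc]
      exact_mod_cast Finset.card_filter_le _ _
    linarith

lemma prob_bound {ξ : ℝ} {n : ℕ} {p : ℝ} (hn : 1 ≤ n)
    (hp0 : 0 ≤ p) (hp1 : p ≤ 1)
    (hplb : (30 : ℝ) * Real.log n ≤ ξ * n * p ^ 2) :
    gnpProb n p {G | ¬ prop ξ n p G} ≤ ((n:ℝ))⁻¹ := by
  have hnR : (1:ℝ) ≤ (n:ℝ) := by exact_mod_cast hn
  have hnpos : (0:ℝ) < n := by linarith
  set c : ℝ := ξ * n * p ^ 2 with hc
  set J : Finset (Finset (Fin n) × Finset (Fin n × Fin n)) :=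
    ((Finset.univ : Finset (Fin n)).powerset ×ˢ
        (Finset.univ : Finset (Fin n × Fin n)).powerset).filter
      (fun q => (1 ≤ q.1.card ∧ (q.1.card : ℝ) ≤ ξ * n / 2) ∧ q.2.card = q.1.card ∧
        (∀ e ∈ q.2, e.1 ≠ e.2 ∧ e.1 ∉ q.1 ∧ e.2 ∉ q.1) ∧
        (∀ e ∈ q.2, ∀ f ∈ q.2, e ≠ f →
          e.1 ≠ f.1 ∧ e.1 ≠ f.2 ∧ e.2 ≠ f.1 ∧ e.2 ≠ f.2)) with hJ
  have hcov : ∀ G, G ∈ {G | ¬ prop ξ n p G} → ∃ q ∈ J, G ∈ bad n c q.1 q.2 := by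
    intro G hG
    simp only [Set.mem_setOf_eq, prop] at hG
    push_neg at hG
    obtain ⟨x, hx1, hx2, W, E, hWc, hEc, hadj, hdisj, hcase⟩ := hG
    refine ⟨(W, E), ?_, ?_⟩
    · rw [hJ, Finset.mem_filter]
      refine ⟨Finset.mem_product.2 ⟨Finset.mem_powerset.2 (Finset.subset_univ _),
        Finset.mem_powerset.2 (Finset.subset_univ _)⟩, ?_⟩
      refine ⟨⟨by rw [hWc]; exact hx1, by rw [hWc]; exact hx2⟩,
        by rw [hWc, hEc], fun e he => ?_, hdisj⟩
      exact ⟨(hadj e he).1.ne, (hadj e he).2.1, (hadj e he).2.2⟩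
    · exact ⟨fun e he => (hadj e he).1, hcase⟩
  have step1 := gnpProb_union_bound hp0 hp1 _ J (fun q => bad n c q.1 q.2) hcov
  have hfibN : ∀ x : ℕ, (J.filter (fun q => q.1.card = x)).card ≤ n ^ (3 * x) := by
    intro x
    have hsub : J.filter (fun q => q.1.card = x) ⊆
        ((Finset.univ : Finset (Fin n)).powersetCard x ×ˢ
          (Finset.univ : Finset (Fin n × Fin n)).powersetCard x) := by
      intro q hq
      rw [Finset.mem_filter] at hq
      obtain ⟨hqJ, hqx⟩ := hq
      rw [hJ, Finset.mem_filter] at hqJ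
      obtain ⟨-, -, hqc, -⟩ := hqJ
      rw [Finset.mem_product, Finset.mem_powersetCard, Finset.mem_powersetCard]
      exact ⟨⟨Finset.subset_univ _, hqx⟩, ⟨Finset.subset_univ _, by rw [hqc, hqx]⟩⟩
    calc (J.filter (fun q => q.1.card = x)).card
        ≤ _ := Finset.card_le_card hsub
      _ = (n.choose x) * ((n * n).choose x) := by
          rw [Finset.card_product, Finset.card_powersetCard, Finset.card_powersetCard,
            Finset.card_univ, Finset.card_univ, Fintype.card_fin, Fintype.card_prod,
            Fintype.card_fin]
      _ ≤ n ^ x * (n * n) ^ x := Nat.mul_le_mul (Nat.choose_le_pow _ _) (Nat.choose_le_pow _ _)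
      _ = n ^ (3 * x) := by ring
  have hmap : ∀ q ∈ J, q.1.card ∈ Finset.Icc 1 n := by
    intro q hq
    rw [hJ, Finset.mem_filter] at hq
    refine Finset.mem_Icc.2 ⟨hq.2.1.1, ?_⟩
    calc q.1.card ≤ (Finset.univ : Finset (Fin n)).card := Finset.card_le_univ _
      _ = n := by rw [Finset.card_univ, Fintype.card_fin]
  calc gnpProb n p {G | ¬ prop ξ n p G}
      ≤ ∑ q ∈ J, gnpProb n p (bad n c q.1 q.2) := step1
    _ ≤ ∑ q ∈ J, ((n:ℝ) ^ (5 * q.1.card))⁻¹ := by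
        refine Finset.sum_le_sum fun q hq => ?_
        rw [hJ, Finset.mem_filter] at hq
        obtain ⟨-, ⟨hq1, hqx⟩, hqc, hqe, hqd⟩ := hq
        calc gnpProb n p (bad n c q.1 q.2)
            ≤ (2 : ℝ) ^ (-((q.1.card : ℝ) * c)) *
                (p ^ q.1.card * (1 + p ^ 2) ^ (q.1.card ^ 2)) :=
              config_bound hp0 hp1 q.1 q.2 hqe hqd hqc
          _ ≤ ((n:ℝ) ^ (5 * q.1.card))⁻¹ := config_num hn hqx hp0 hp1 hplb
    _ = ∑ x ∈ Finset.Icc 1 n, ∑ q ∈ J.filter (fun q => q.1.card = x),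
          ((n:ℝ) ^ (5 * q.1.card))⁻¹ :=
        (Finset.sum_fiberwise_of_maps_to hmap _).symm
    _ ≤ ∑ x ∈ Finset.Icc 1 n, ((n:ℝ) ^ 2)⁻¹ := by
        refine Finset.sum_le_sum fun x hx => ?_
        obtain ⟨hx1, hxn⟩ := Finset.mem_Icc.1 hx
        calc ∑ q ∈ J.filter (fun q => q.1.card = x), ((n:ℝ) ^ (5 * q.1.card))⁻¹
            = ∑ _q ∈ J.filter (fun q => q.1.card = x), ((n:ℝ) ^ (5 * x))⁻¹ := by
              refine Finset.sum_congr rfl fun q hq => ?_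
              rw [(Finset.mem_filter.1 hq).2]
          _ = ((J.filter (fun q => q.1.card = x)).card : ℝ) * ((n:ℝ) ^ (5 * x))⁻¹ := by
              rw [Finset.sum_const, nsmul_eq_mul]
          _ ≤ ((n:ℝ) ^ (3 * x)) * ((n:ℝ) ^ (5 * x))⁻¹ := by
              refine mul_le_mul_of_nonneg_right ?_ (by positivity)
              exact_mod_cast hfibN x
          _ = ((n:ℝ) ^ (2 * x))⁻¹ := by
              rw [show 5 * x = 3 * x + 2 * x by ring, pow_add, mul_inv,
                ← mul_assoc, mul_inv_cancel₀ (by positivity), one_mul]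
          _ ≤ ((n:ℝ) ^ 2)⁻¹ := by
              apply inv_anti₀ (by positivity)
              exact pow_le_pow_right₀ hnR (by omega)
    _ ≤ (n:ℝ)⁻¹ := by
        rw [Finset.sum_const, Nat.card_Icc, nsmul_eq_mul]
        have : ((n + 1 - 1 : ℕ) : ℝ) = (n : ℝ) := by push_cast; ring
        rw [this, sq, mul_inv]
        rw [← mul_assoc, mul_inv_cancel₀ (by positivity), one_mul]

lemma main_bound {ξ : ℝ} {n : ℕ} {p : ℝ} (hn : 1 ≤ n) (hp0 : 0 ≤ p)
    (hplb : (30 : ℝ) * Real.log n ≤ ξ * n * p ^ 2) :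
    1 - (n:ℝ)⁻¹ ≤ gnpProb n p {G | prop ξ n p G} ∧
      gnpProb n p {G | prop ξ n p G} ≤ 1 := by
  have hnR : (1:ℝ) ≤ (n:ℝ) := by exact_mod_cast hn
  have hinv : (0:ℝ) ≤ (n:ℝ)⁻¹ := by positivity
  by_cases hp1 : p ≤ 1
  · have hcompl := gnpProb_compl (n := n) p {G | prop ξ n p G}
    have hco : {G : SimpleGraph (Fin n) | G ∉ {G' : SimpleGraph (Fin n) | prop ξ n p G'}}
        = {G : SimpleGraph (Fin n) | ¬ prop ξ n p G} := rfl
    rw [hco] at hcompl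
    have hb := prob_bound hn hp0 hp1 hplb
    have hnn := gnpProb_nonneg hp0 hp1 {G : SimpleGraph (Fin n) | ¬ prop ξ n p G}
    constructor
    · linarith
    · linarith
  · have hbig : 1/2 < p^2 := by nlinarith
    have huniv := gnpProb_of_forall (n := n) p {G | prop ξ n p G}
      (fun G => prop_of_large_p hbig G)
    rw [huniv]
    constructor
    · linarith
    · exact le_refl 1

end StmtAux

theorem stmt_11' (ξ : ℝ) (hξ0 : 0 < ξ) (hξ1 : ξ < 1) :
    ∃ C : ℝ, 0 < C ∧
      ∀ p : ℕ → ℝ, (∀ n : ℕ, C * Real.sqrt (Real.log n / n) ≤ p n) →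
        AAS p (fun n G => StmtAux.prop ξ n (p n) G) := by
  refine ⟨Real.sqrt (30 / ξ), Real.sqrt_pos.2 (by positivity), ?_⟩
  intro p hp
  have hp0 : ∀ n, 0 ≤ p n := fun n =>
    le_trans (mul_nonneg (Real.sqrt_nonneg _) (Real.sqrt_nonneg _)) (hp n)
  have hplb : ∀ n : ℕ, 1 ≤ n → (30:ℝ) * Real.log n ≤ ξ * n * (p n)^2 := by
    intro n hn
    have hnR : (1:ℝ) ≤ (n:ℝ) := by exact_mod_cast hn
    have hnpos : (0:ℝ) < n := by linarith
    have hlogn : 0 ≤ Real.log n := Real.log_nonneg hnR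
    have hq : (0:ℝ) ≤ 30/ξ := by positivity
    have hsq : Real.sqrt (30/ξ) * Real.sqrt (Real.log n / n)
        = Real.sqrt ((30/ξ) * (Real.log n / n)) := (Real.sqrt_mul hq _).symm
    have h1 : Real.sqrt ((30/ξ) * (Real.log n / n)) ≤ p n := by
      rw [← hsq]; exact hp n
    have h2 : (30/ξ) * (Real.log n / n) ≤ (p n)^2 := by
      have h3 := pow_le_pow_left₀ (Real.sqrt_nonneg _) h1 2
      rwa [Real.sq_sqrt (by positivity)] at h3
    calc (30:ℝ) * Real.log n = ξ * n * ((30/ξ) * (Real.log n / n)) := by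
          field_simp
      _ ≤ ξ * n * (p n)^2 := mul_le_mul_of_nonneg_left h2 (by positivity)
  have hsq1 : ∀ n : ℕ, 1 ≤ n →
      1 - (n:ℝ)⁻¹ ≤ gnpProb n (p n) {G | StmtAux.prop ξ n (p n) G}
        ∧ gnpProb n (p n) {G | StmtAux.prop ξ n (p n) G} ≤ 1 :=
    fun n hn => StmtAux.main_bound hn (hp0 n) (hplb n hn)
  show Filter.Tendsto (fun n => gnpProb n (p n) {G | StmtAux.prop ξ n (p n) G})
    Filter.atTop (nhds 1)
  have hlim : Filter.Tendsto (fun n : ℕ => 1 - (n:ℝ)⁻¹) Filter.atTop (nhds 1) := by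
    have h0 : Filter.Tendsto (fun n : ℕ => ((n:ℝ))⁻¹) Filter.atTop (nhds 0) :=
      tendsto_inv_atTop_nhds_zero_nat
    have h1 := Filter.Tendsto.sub (tendsto_const_nhds (x := (1:ℝ))
      (f := Filter.atTop (α := ℕ))) h0
    simpa using h1
  refine tendsto_of_tendsto_of_tendsto_of_le_of_le' hlim tendsto_const_nhds ?_ ?_
  · exact Filter.eventually_atTop.2 ⟨1, fun n hn => (hsq1 n hn).1⟩
  · exact Filter.eventually_atTop.2 ⟨1, fun n hn => (hsq1 n hn).2⟩


/-- **Proposition (no small expanding configurations).** For every `ξ ∈ (0,1)` there is `C`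
such that if `p ≥ C√(log n / n)`, then a.a.s. `G(n,p)` contains no set `W` of `x` vertices
and set `E` of `x` independent edges avoiding `W` (for any `1 ≤ x ≤ ξn/2`) such that either
the endpoints of each edge of `E` have at least `ξnp²` common neighbours in `W`, or every
vertex of `W` is adjacent to both endpoints of at least `ξnp²` edges of `E`. -/
theorem stmt_11 (ξ : ℝ) (hξ0 : 0 < ξ) (hξ1 : ξ < 1) :
    ∃ C : ℝ, 0 < C ∧
      ∀ p : ℕ → ℝ, (∀ n : ℕ, C * Real.sqrt (Real.log n / n) ≤ p n) →
        AAS p (fun n G =>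
          ∀ x : ℕ, 1 ≤ x → (x : ℝ) ≤ ξ * n / 2 →
            ¬ ∃ (W : Finset (Fin n)) (E : Finset (Fin n × Fin n)),
              W.card = x ∧ E.card = x ∧
              (∀ e ∈ E, G.Adj e.1 e.2 ∧ e.1 ∉ W ∧ e.2 ∉ W) ∧
              (∀ e ∈ E, ∀ f ∈ E, e ≠ f →
                e.1 ≠ f.1 ∧ e.1 ≠ f.2 ∧ e.2 ≠ f.1 ∧ e.2 ≠ f.2) ∧
              ((∀ e ∈ E, ξ * n * (p n) ^ 2 ≤ (codegIn G e.1 e.2 W : ℝ)) ∨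
               (∀ w ∈ W, ξ * n * (p n) ^ 2 ≤
                  ((E.filter fun e => G.Adj w e.1 ∧ G.Adj w e.2).card : ℝ)))) :=
  stmt_11' ξ hξ0 hξ1
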